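/- For all natural n ≥ 4, 2ỹ_{n+1} = 2ỹ_n - c·ψ^{n-1}, where ψ = 1 - φ and φ = (1+√5)/2 is the golden ratio. -/

import Mathlib

noncomputable def c : ℝ := 4 / (9 - Real.sqrt 5)
noncomputable def φ : ℝ := (1 + Real.sqrt 5) / 2
noncomputable def ψ : ℝ := 1 - φ
noncomputable def F (k : ℕ) : ℝ := (φ ^ k - ψ ^ k) / Real.sqrt 5

/-- ỹ_n for n ≥ 4. -/
noncomputable def ytil (n : ℕ) : ℝ := ((3 * F n + F (n - 2) - 2) * c - 2 * F n + 2) / 2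

theorem stmt2 (n : ℕ) (hn : 4 ≤ n) :
    2 * ytil (n + 1) = 2 * ytil n - c * ψ ^ (n - 1) := by
  obtain ⟨k, hk⟩ := Nat.exists_eq_add_of_le hn
  have hk' : 4 + k + 1 = k + 5 := by omega
  have hk'' : 4 + k = k + 4 := by omega
  rw [hk, hk', hk'']
  have h5 : Real.sqrt 5 * Real.sqrt 5 = 5 := Real.mul_self_sqrt (by norm_num)
  have hs : Real.sqrt 5 ≠ 0 := by positivity
  have hs' : (0:ℝ) < Real.sqrt 5 := Real.sqrt_pos.mpr (by norm_num)
  have h3 : Real.sqrt 5 < 3 := by nlinarith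
  have h9 : (9:ℝ) - Real.sqrt 5 ≠ 0 := by nlinarith
  have e2 : k + 5 - 2 = k + 3 := by omega
  have e4 : k + 4 - 2 = k + 2 := by omega
  have e5 : k + 4 - 1 = k + 3 := by omega
  have hφ2 : φ ^ 2 = (3 + Real.sqrt 5) / 2 := by
    simp only [φ]; linear_combination h5 / 4
  have hφ3 : φ ^ 3 = (4 + 2 * Real.sqrt 5) / 2 := by
    simp only [φ]; linear_combination (Real.sqrt 5 + 3) / 8 * h5
  have hφ4 : φ ^ 4 = (7 + 3 * Real.sqrt 5) / 2 := by
    have h : φ ^ 4 = φ ^ 2 * φ ^ 2 := by ring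
    rw [h, hφ2]; linear_combination h5 / 4
  have hφ5 : φ ^ 5 = (11 + 5 * Real.sqrt 5) / 2 := by
    have h : φ ^ 5 = φ ^ 2 * φ ^ 3 := by ring
    rw [h, hφ2, hφ3]; linear_combination h5 / 2
  have hψ1 : ψ = (1 - Real.sqrt 5) / 2 := by simp only [ψ, φ]; ring
  have hψ2 : ψ ^ 2 = (3 - Real.sqrt 5) / 2 := by
    rw [hψ1]; linear_combination h5 / 4
  have hψ3 : ψ ^ 3 = (4 - 2 * Real.sqrt 5) / 2 := by
    rw [hψ1]; linear_combination (3 - Real.sqrt 5) / 8 * h5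
  have hψ4 : ψ ^ 4 = (7 - 3 * Real.sqrt 5) / 2 := by
    have h : ψ ^ 4 = ψ ^ 2 * ψ ^ 2 := by ring
    rw [h, hψ2]; linear_combination h5 / 4
  have hψ5 : ψ ^ 5 = (11 - 5 * Real.sqrt 5) / 2 := by
    have h : ψ ^ 5 = ψ ^ 2 * ψ ^ 3 := by ring
    rw [h, hψ2, hψ3]; linear_combination h5 / 2
  simp only [ytil, F, e2, e4, e5, pow_add, hφ2, hφ3, hφ4, hφ5, hψ2, hψ3, hψ4, hψ5, c]
  set a := φ ^ k with ha
  set b := ψ ^ k with hb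
  field_simp
  linear_combination 4 * (a - b) * h5
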